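/- The Chen–Epstein density is a probability density: for every $\alpha\in\mathbb{R}$, $\beta\in\mathbb{R}$, $c\in\mathbb{R}$, the function $f^{\alpha,\beta,c}(y)=\frac{1}{\sqrt{2\pi}}e^{-\frac{(y-\beta)^2-2\alpha(|y-c|-|c-\beta|)+\alpha^2}{2}}-\alpha e^{2\alpha|y-c|}\Phi(-|c-\beta|-|y-c|-\alpha)$ satisfies $\int_{\mathbb{R}} f^{\alpha,\beta,c}(y)\,dy=1$, where $\Phi$ is the standard normal CDF. -/

import Mathlib

open MeasureTheory
open Real Set Filter Topology

/-- The standard normal cumulative distribution function. -/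
noncomputable def stdNormalCDF (x : ℝ) : ℝ :=
  (Real.sqrt (2 * Real.pi))⁻¹ * ∫ y in Set.Iic x, Real.exp (-y ^ 2 / 2)

local notation "S" => Real.sqrt (2 * Real.pi)

lemma S_pos : 0 < Real.sqrt (2 * Real.pi) := Real.sqrt_pos.2 (by positivity)

lemma exp_mul_exp (u v w : ℝ) (h : u + v = w) : Real.exp u * Real.exp v = Real.exp w := by
  rw [← Real.exp_add, h]

lemma gauss_integrable : Integrable (fun t : ℝ => Real.exp (-t ^ 2 / 2)) := by
  have h := integrable_exp_neg_mul_sq (b := 1/2) (by norm_num)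
  exact h.congr (Eventually.of_forall fun t => by ring_nf)

lemma gauss_cont : Continuous (fun t : ℝ => Real.exp (-t ^ 2 / 2)) := by continuity

lemma gauss_integral : ∫ t : ℝ, Real.exp (-t ^ 2 / 2) = S := by
  have h := integral_gaussian (1/2)
  rw [show (π / (1/2) : ℝ) = 2 * π by ring] at h
  rw [← h]; congr 1; funext t; congr 1; ring

lemma stdNormalCDF_eq (x : ℝ) : stdNormalCDF x =
    S⁻¹ * ((∫ t in Iic (0:ℝ), Real.exp (-t ^ 2 / 2)) + ∫ t in (0:ℝ)..x, Real.exp (-t ^ 2 / 2)) := by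
  rw [stdNormalCDF]
  congr 1
  rw [← intervalIntegral.integral_Iic_sub_Iic gauss_integrable.integrableOn
    gauss_integrable.integrableOn]
  ring

lemma hasDerivAt_cdf (x : ℝ) :
    HasDerivAt stdNormalCDF (S⁻¹ * Real.exp (-x ^ 2 / 2)) x := by
  have h1 : HasDerivAt (fun u : ℝ => ∫ t in (0:ℝ)..u, Real.exp (-t ^ 2 / 2))
      (Real.exp (-x ^ 2 / 2)) x :=
    intervalIntegral.integral_hasDerivAt_right gauss_integrable.intervalIntegrable
      gauss_cont.stronglyMeasurable.stronglyMeasurableAtFilter gauss_cont.continuousAt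
  have h2 := (h1.const_add (∫ t in Iic (0:ℝ), Real.exp (-t ^ 2 / 2))).const_mul S⁻¹
  have : stdNormalCDF = fun u => S⁻¹ *
      ((∫ t in Iic (0:ℝ), Real.exp (-t ^ 2 / 2)) + ∫ t in (0:ℝ)..u, Real.exp (-t ^ 2 / 2)) :=
    funext stdNormalCDF_eq
  rw [this]
  exact h2

lemma cdf_continuous : Continuous stdNormalCDF :=
  continuous_iff_continuousAt.2 fun x => (hasDerivAt_cdf x).continuousAt

lemma cdf_nonneg (x : ℝ) : 0 ≤ stdNormalCDF x :=
  mul_nonneg (inv_nonneg.2 (Real.sqrt_nonneg _))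
    (integral_nonneg fun t => (Real.exp_pos _).le)

lemma integrableOn_exp_mul_Iic' {a : ℝ} (ha : 0 < a) (x : ℝ) :
    IntegrableOn (fun t : ℝ => Real.exp (a * t)) (Iic x) := by
  have h : IntegrableOn (fun t : ℝ => Real.exp (-(a * t))) (Ioi (-x)) := by
    have := exp_neg_integrableOn_Ioi (-x) ha
    exact this.congr_fun (fun t _ => by simp only [neg_mul]) measurableSet_Ioi
  have h2 : Integrable ((Ioi (-x)).indicator fun t : ℝ => Real.exp (-(a * t))) :=
    (integrable_indicator_iff measurableSet_Ioi).2 h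
  have h3 := h2.comp_neg
  have h4 : (fun t : ℝ => ((Ioi (-x)).indicator fun u : ℝ => Real.exp (-(a * u))) (-t))
      = (Iio x).indicator fun t : ℝ => Real.exp (a * t) := by
    funext t
    by_cases ht : t < x
    · simp only [Set.indicator_of_mem, Set.mem_Ioi, Set.mem_Iio, ht, neg_lt_neg_iff,
        if_true, Set.indicator_apply]
      ring_nf
    · simp [Set.indicator_apply, ht]
  rw [h4] at h3
  have h5 : IntegrableOn (fun t : ℝ => Real.exp (a * t)) (Iio x) :=
    (integrable_indicator_iff measurableSet_Iio).1 h3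
  rwa [IntegrableOn, Measure.restrict_congr_set Iio_ae_eq_Iic] at h5

lemma integral_exp_mul_Iic' {a : ℝ} (ha : 0 < a) (x : ℝ) :
    ∫ t in Iic x, Real.exp (a * t) = a⁻¹ * Real.exp (a * x) := by
  have h1 : ∫ t in Iic x, Real.exp (a * t) = ∫ t in Ioi (-x), Real.exp (-(t * a)) := by
    rw [← integral_comp_neg_Iic]
    congr 1; funext t; ring_nf
  rw [h1]
  have h2 := MeasureTheory.integral_comp_mul_right_Ioi (fun u => Real.exp (-u)) (-x) ha
  simp only [smul_eq_mul] at h2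
  rw [h2, integral_exp_neg_Ioi]
  ring_nf

lemma cdf_le {a : ℝ} (ha : 0 < a) (x : ℝ) :
    stdNormalCDF x ≤ S⁻¹ * a⁻¹ * Real.exp (a ^ 2 / 2 + a * x) := by
  rw [stdNormalCDF, mul_assoc]
  refine mul_le_mul_of_nonneg_left ?_ (inv_nonneg.2 (Real.sqrt_nonneg _))
  have hb : ∀ t : ℝ, Real.exp (-t ^ 2 / 2) ≤ Real.exp (a ^ 2 / 2) * Real.exp (a * t) := by
    intro t
    rw [← Real.exp_add]
    exact Real.exp_le_exp.2 (by nlinarith [sq_nonneg (t + a)])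
  calc (∫ t in Iic x, Real.exp (-t ^ 2 / 2))
      ≤ ∫ t in Iic x, Real.exp (a ^ 2 / 2) * Real.exp (a * t) := by
        refine integral_mono_of_nonneg (Eventually.of_forall fun t => (Real.exp_pos _).le)
          (((integrableOn_exp_mul_Iic' ha x).const_mul _)) (Eventually.of_forall hb)
    _ = a⁻¹ * Real.exp (a ^ 2 / 2 + a * x) := by
        rw [integral_const_mul, integral_exp_mul_Iic' ha x, ← mul_assoc,
          mul_comm (Real.exp (a ^ 2 / 2)) a⁻¹, mul_assoc, ← Real.exp_add]

lemma cdf_tendsto_atTop : Tendsto stdNormalCDF atTop (𝓝 1) := by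
  have h0 : Tendsto (fun x : ℝ => ∫ t in (0:ℝ)..x, Real.exp (-t ^ 2 / 2)) atTop
      (𝓝 (∫ t in Ioi (0:ℝ), Real.exp (-t ^ 2 / 2))) :=
    intervalIntegral_tendsto_integral_Ioi 0 gauss_integrable.integrableOn tendsto_id
  have h1 := (h0.const_add (∫ t in Iic (0:ℝ), Real.exp (-t ^ 2 / 2))).const_mul S⁻¹
  have h2 : S⁻¹ * ((∫ t in Iic (0:ℝ), Real.exp (-t ^ 2 / 2))
      + ∫ t in Ioi (0:ℝ), Real.exp (-t ^ 2 / 2)) = 1 := by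
    rw [intervalIntegral.integral_Iic_add_Ioi gauss_integrable.integrableOn gauss_integrable.integrableOn,
      gauss_integral, inv_mul_cancel₀ S_pos.ne']
  rw [← h2]
  have : stdNormalCDF = fun x => S⁻¹ *
      ((∫ t in Iic (0:ℝ), Real.exp (-t ^ 2 / 2)) + ∫ t in (0:ℝ)..x, Real.exp (-t ^ 2 / 2)) :=
    funext stdNormalCDF_eq
  rw [this]
  exact h1

lemma cdf_tendsto_atBot : Tendsto stdNormalCDF atBot (𝓝 0) := by
  have hb : Tendsto (fun x : ℝ => S⁻¹ * 1⁻¹ * Real.exp (1 ^ 2 / 2 + 1 * x)) atBot (𝓝 0) := by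
    rw [show (0:ℝ) = S⁻¹ * 1⁻¹ * 0 by ring]
    refine Tendsto.const_mul _ (Real.tendsto_exp_atBot.comp ?_)
    have := tendsto_atBot_add_const_left (atBot : Filter ℝ) ((1:ℝ)^2/2)
      (tendsto_id : Tendsto id (atBot : Filter ℝ) atBot)
    simpa [Function.comp] using this
  exact tendsto_of_tendsto_of_tendsto_of_le_of_le tendsto_const_nhds hb
    (fun x => cdf_nonneg x) (fun x => cdf_le one_pos x)

lemma hasDerivAt_cdf_linear (r s x : ℝ) :
    HasDerivAt (fun y => stdNormalCDF (r * y + s))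
      (S⁻¹ * Real.exp (-(r * x + s) ^ 2 / 2) * r) x := by
  have h1 : HasDerivAt (fun y : ℝ => r * y + s) r x := by
    simpa using ((hasDerivAt_id x).const_mul r).add_const s
  have := (hasDerivAt_cdf (r * x + s)).comp x h1
  exact this

lemma hasDerivAt_exp_linear (p q x : ℝ) :
    HasDerivAt (fun y => Real.exp (p * y + q)) (p * Real.exp (p * x + q)) x := by
  have h1 : HasDerivAt (fun y : ℝ => p * y + q) p x := by
    simpa using ((hasDerivAt_id x).const_mul p).add_const q
  simpa [mul_comm] using h1.exp

lemma T_le (p q r s : ℝ) {a : ℝ} (ha : 0 < a) (y : ℝ) :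
    Real.exp (p * y + q) * stdNormalCDF (r * y + s)
      ≤ S⁻¹ * a⁻¹ * Real.exp (a ^ 2 / 2 + q + a * s) * Real.exp ((p + a * r) * y) := by
  calc Real.exp (p * y + q) * stdNormalCDF (r * y + s)
      ≤ Real.exp (p * y + q) * (S⁻¹ * a⁻¹ * Real.exp (a ^ 2 / 2 + a * (r * y + s))) :=
        mul_le_mul_of_nonneg_left (cdf_le ha _) (Real.exp_pos _).le
    _ = S⁻¹ * a⁻¹ * Real.exp (a ^ 2 / 2 + q + a * s) * Real.exp ((p + a * r) * y) := by
        rw [mul_assoc (S⁻¹ * a⁻¹), exp_mul_exp _ _ ((a ^ 2 / 2 + q + a * s) + (p + a * r) * y) rfl]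
        rw [mul_comm (Real.exp (p * y + q)), mul_assoc,
          exp_mul_exp _ _ ((a ^ 2 / 2 + q + a * s) + (p + a * r) * y) (by ring)]

lemma T_nonneg (p q r s y : ℝ) : 0 ≤ Real.exp (p * y + q) * stdNormalCDF (r * y + s) :=
  mul_nonneg (Real.exp_pos _).le (cdf_nonneg _)

lemma exp_linear_tendsto_zero_atTop {k : ℝ} (hk : k < 0) (b : ℝ) :
    Tendsto (fun y : ℝ => b * Real.exp (k * y)) atTop (𝓝 0) := by
  rw [show (0:ℝ) = b * 0 by ring]
  exact (Real.tendsto_exp_atBot.comp (Tendsto.const_mul_atTop_of_neg hk tendsto_id)).const_mul b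

lemma exp_linear_tendsto_zero_atBot {k : ℝ} (hk : 0 < k) (b : ℝ) :
    Tendsto (fun y : ℝ => b * Real.exp (k * y)) atBot (𝓝 0) := by
  rw [show (0:ℝ) = b * 0 by ring]
  exact (Real.tendsto_exp_atBot.comp (Tendsto.const_mul_atBot hk tendsto_id)).const_mul b

lemma T_tendsto_zero_atTop (p q s : ℝ) {r : ℝ} (hr : r < 0) :
    Tendsto (fun y => Real.exp (p * y + q) * stdNormalCDF (r * y + s)) atTop (𝓝 0) := by
  set a : ℝ := (max p 0 + 1) / (-r) with ha
  have ha0 : 0 < a := div_pos (by positivity) (by linarith)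
  have har : a * (-r) = max p 0 + 1 := div_mul_cancel₀ _ (by linarith)
  have hpr : p + a * r < 0 := by nlinarith [le_max_left p 0]
  exact tendsto_of_tendsto_of_tendsto_of_le_of_le tendsto_const_nhds
    (exp_linear_tendsto_zero_atTop hpr (S⁻¹ * a⁻¹ * Real.exp (a ^ 2 / 2 + q + a * s)))
    (fun y => T_nonneg p q r s y) (fun y => T_le p q r s ha0 y)

lemma T_tendsto_zero_atBot (p q s : ℝ) {r : ℝ} (hr : 0 < r) :
    Tendsto (fun y => Real.exp (p * y + q) * stdNormalCDF (r * y + s)) atBot (𝓝 0) := by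
  set a : ℝ := (max (-p) 0 + 1) / r with ha
  have ha0 : 0 < a := div_pos (by positivity) hr
  have har : a * r = max (-p) 0 + 1 := div_mul_cancel₀ _ (by linarith)
  have hpr : 0 < p + a * r := by nlinarith [le_max_left (-p) 0]
  exact tendsto_of_tendsto_of_tendsto_of_le_of_le tendsto_const_nhds
    (exp_linear_tendsto_zero_atBot hpr (S⁻¹ * a⁻¹ * Real.exp (a ^ 2 / 2 + q + a * s)))
    (fun y => T_nonneg p q r s y) (fun y => T_le p q r s ha0 y)

lemma T_continuous (p q r s : ℝ) :
    Continuous (fun y => Real.exp (p * y + q) * stdNormalCDF (r * y + s)) := by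
  exact (Real.continuous_exp.comp (by continuity)).mul (cdf_continuous.comp (by continuity))

lemma T_integrableOn_Ioi (p q s c : ℝ) {r : ℝ} (hr : r < 0) :
    IntegrableOn (fun y => Real.exp (p * y + q) * stdNormalCDF (r * y + s)) (Ioi c) := by
  set a : ℝ := (max p 0 + 1) / (-r) with ha
  have ha0 : 0 < a := div_pos (by positivity) (by linarith)
  have har : a * (-r) = max p 0 + 1 := div_mul_cancel₀ _ (by linarith)
  have hpr : p + a * r < 0 := by nlinarith [le_max_left p 0]
  set K : ℝ := S⁻¹ * a⁻¹ * Real.exp (a ^ 2 / 2 + q + a * s) with hK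
  have hint : IntegrableOn (fun y : ℝ => K * Real.exp (-(-(p + a * r)) * y)) (Ioi c) :=
    (exp_neg_integrableOn_Ioi c (by linarith)).const_mul K
  refine Integrable.mono' hint ((T_continuous p q r s).aestronglyMeasurable) ?_
  refine Eventually.of_forall fun y => ?_
  rw [Real.norm_eq_abs, abs_of_nonneg (T_nonneg p q r s y), neg_neg, hK]
  exact T_le p q r s ha0 y

lemma T_integrableOn_Iic (p q s c : ℝ) {r : ℝ} (hr : 0 < r) :
    IntegrableOn (fun y => Real.exp (p * y + q) * stdNormalCDF (r * y + s)) (Iic c) := by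
  set a : ℝ := (max (-p) 0 + 1) / r with ha
  have ha0 : 0 < a := div_pos (by positivity) hr
  have har : a * r = max (-p) 0 + 1 := div_mul_cancel₀ _ (by linarith)
  have hpr : 0 < p + a * r := by nlinarith [le_max_left (-p) 0]
  set K : ℝ := S⁻¹ * a⁻¹ * Real.exp (a ^ 2 / 2 + q + a * s) with hK
  have hint : IntegrableOn (fun y : ℝ => K * Real.exp ((p + a * r) * y)) (Iic c) :=
    (integrableOn_exp_mul_Iic' hpr c).const_mul K
  refine Integrable.mono' hint ((T_continuous p q r s).aestronglyMeasurable) ?_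
  refine Eventually.of_forall fun y => ?_
  rw [Real.norm_eq_abs, abs_of_nonneg (T_nonneg p q r s y), hK]
  exact T_le p q r s ha0 y

lemma integral_Ioi_side (α k c m : ℝ) :
    ∫ y in Ioi c, (S⁻¹ * Real.exp (-((y - k) ^ 2 - 2 * α * ((y - c) - m) + α ^ 2) / 2)
        - α * Real.exp (2 * α * (y - c)) * stdNormalCDF (-m - (y - c) - α))
    = Real.exp (-(α * ((c - k) + m))) * (1 - stdNormalCDF ((c - k) - α))
      - 1/2 * Real.exp (-(2 * α * m)) * (1 - stdNormalCDF (m - α))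
      + 1/2 * stdNormalCDF (-m - α) := by
  set G : ℝ → ℝ := fun y =>
    Real.exp (-(α * ((c - k) + m))) * stdNormalCDF (1 * y + -(k + α))
      - 1/2 * (Real.exp (2 * α * y + -(2 * α * c)) * stdNormalCDF (-1 * y + (c - m - α)))
      - 1/2 * Real.exp (-(2 * α * m)) * stdNormalCDF (1 * y + (m - α - c)) with hGdef
  have hderiv : ∀ x ∈ Ici c, HasDerivAt G
      (S⁻¹ * Real.exp (-((x - k) ^ 2 - 2 * α * ((x - c) - m) + α ^ 2) / 2)
        - α * Real.exp (2 * α * (x - c)) * stdNormalCDF (-m - (x - c) - α)) x := by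
    intro x _
    have h1 := (hasDerivAt_cdf_linear 1 (-(k + α)) x).const_mul
      (Real.exp (-(α * ((c - k) + m))))
    have h2 := ((hasDerivAt_exp_linear (2 * α) (-(2 * α * c)) x).mul
      (hasDerivAt_cdf_linear (-1) (c - m - α) x)).const_mul (1/2 : ℝ)
    have h3 := (hasDerivAt_cdf_linear 1 (m - α - c) x).const_mul
      (1/2 * Real.exp (-(2 * α * m)))
    have h := (h1.sub h2).sub h3
    convert h using 1
    · rfl
    · rfl
    · rfl
    have e1 : Real.exp (-(α * ((c - k) + m))) * Real.exp (-(1 * x + -(k + α)) ^ 2 / 2)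
        = Real.exp (-((x - k) ^ 2 - 2 * α * ((x - c) - m) + α ^ 2) / 2) :=
      exp_mul_exp _ _ _ (by ring)
    have e2 : Real.exp (2 * α * x + -(2 * α * c)) * Real.exp (-(-1 * x + (c - m - α)) ^ 2 / 2)
        = Real.exp (-(2 * α * m)) * Real.exp (-(1 * x + (m - α - c)) ^ 2 / 2) := by
      rw [exp_mul_exp _ _ (2 * α * x + -(2 * α * c) + -(-1 * x + (c - m - α)) ^ 2 / 2) rfl,
        exp_mul_exp _ _ (2 * α * x + -(2 * α * c) + -(-1 * x + (c - m - α)) ^ 2 / 2) (by ring)]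
    have e3 : Real.exp (2 * α * x + -(2 * α * c)) = Real.exp (2 * α * (x - c)) := by
      congr 1; ring
    have e4 : stdNormalCDF (-1 * x + (c - m - α)) = stdNormalCDF (-m - (x - c) - α) := by
      congr 1; ring
    linear_combination (-(Real.sqrt (2 * Real.pi))⁻¹) * e1 + (α * stdNormalCDF (-m - (x - c) - α)) * e3
      + (α * Real.exp (2 * α * x + -(2 * α * c))) * e4 + (-(1/2) * (Real.sqrt (2 * Real.pi))⁻¹) * e2
  have hint : IntegrableOn (fun y =>
      S⁻¹ * Real.exp (-((y - k) ^ 2 - 2 * α * ((y - c) - m) + α ^ 2) / 2)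
        - α * Real.exp (2 * α * (y - c)) * stdNormalCDF (-m - (y - c) - α)) (Ioi c) := by
    have hA : Integrable (fun y : ℝ => Real.exp (-(y - (k + α)) ^ 2 / 2)) := by
      have := gauss_integrable.comp_sub_right (k + α)
      exact this.congr (Eventually.of_forall fun y => by norm_num)
    have hB := T_integrableOn_Ioi (2 * α) (-(2 * α * c)) (c - m - α) c
      (by norm_num : (-1 : ℝ) < 0)
    refine Integrable.congr (((hA.const_mul (S⁻¹ * Real.exp (-(α * ((c - k) + m))))).integrableOn.sub
      (hB.const_mul α))) (Eventually.of_forall fun y => ?_)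
    have g1 : S⁻¹ * Real.exp (-(α * ((c - k) + m))) * Real.exp (-(y - (k + α)) ^ 2 / 2)
        = S⁻¹ * Real.exp (-((y - k) ^ 2 - 2 * α * ((y - c) - m) + α ^ 2) / 2) := by
      rw [mul_assoc, exp_mul_exp _ _ (-((y - k) ^ 2 - 2 * α * ((y - c) - m) + α ^ 2) / 2) (by ring)]
    have g2 : Real.exp (2 * α * y + -(2 * α * c)) = Real.exp (2 * α * (y - c)) := by
      congr 1; ring
    have g3 : stdNormalCDF (-1 * y + (c - m - α)) = stdNormalCDF (-m - (y - c) - α) := by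
      congr 1; ring
    simp only [Pi.sub_apply]
    rw [g1, g2, g3]
    ring
  have htend : Tendsto G atTop (𝓝 (Real.exp (-(α * ((c - k) + m))) * 1 - 1/2 * 0
      - 1/2 * Real.exp (-(2 * α * m)) * 1)) := by
    have hlin1 : Tendsto (fun y : ℝ => 1 * y + -(k + α)) atTop atTop := by
      have he : (fun y : ℝ => 1 * y + -(k + α)) = fun y : ℝ => y + -(k + α) := by
        funext y; ring
      rw [he]; exact tendsto_atTop_add_const_right _ _ tendsto_id
    have hlin3 : Tendsto (fun y : ℝ => 1 * y + (m - α - c)) atTop atTop := by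
      have he : (fun y : ℝ => 1 * y + (m - α - c)) = fun y : ℝ => y + (m - α - c) := by
        funext y; ring
      rw [he]; exact tendsto_atTop_add_const_right _ _ tendsto_id
    have t1 : Tendsto (fun y => Real.exp (-(α * ((c - k) + m)))
        * stdNormalCDF (1 * y + -(k + α))) atTop
        (𝓝 (Real.exp (-(α * ((c - k) + m))) * 1)) :=
      (cdf_tendsto_atTop.comp hlin1).const_mul _
    have t2 : Tendsto (fun y => (1:ℝ)/2 * (Real.exp (2 * α * y + -(2 * α * c))
        * stdNormalCDF (-1 * y + (c - m - α)))) atTop (𝓝 (1/2 * 0)) :=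
      (T_tendsto_zero_atTop (2 * α) (-(2 * α * c)) (c - m - α)
        (by norm_num : (-1:ℝ) < 0)).const_mul _
    have t3 : Tendsto (fun y => (1:ℝ)/2 * Real.exp (-(2 * α * m))
        * stdNormalCDF (1 * y + (m - α - c))) atTop
        (𝓝 (1/2 * Real.exp (-(2 * α * m)) * 1)) :=
      (cdf_tendsto_atTop.comp hlin3).const_mul _
    exact (t1.sub t2).sub t3
  rw [integral_Ioi_of_hasDerivAt_of_tendsto' hderiv hint htend, hGdef]
  have f1 : stdNormalCDF (1 * c + -(k + α)) = stdNormalCDF ((c - k) - α) := by congr 1; ring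
  have f2 : stdNormalCDF (-1 * c + (c - m - α)) = stdNormalCDF (-m - α) := by congr 1; ring
  have f3 : stdNormalCDF (1 * c + (m - α - c)) = stdNormalCDF (m - α) := by congr 1; ring
  have f4 : Real.exp (2 * α * c + -(2 * α * c)) = 1 := by
    rw [show 2 * α * c + -(2 * α * c) = 0 by ring, Real.exp_zero]
  simp only [f1, f2, f3, f4]
  ring

lemma integrableOn_side (α k c m : ℝ) : IntegrableOn (fun y =>
    S⁻¹ * Real.exp (-((y - k) ^ 2 - 2 * α * ((y - c) - m) + α ^ 2) / 2)
      - α * Real.exp (2 * α * (y - c)) * stdNormalCDF (-m - (y - c) - α)) (Ioi c) := by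
  have hA : Integrable (fun y : ℝ => Real.exp (-(y - (k + α)) ^ 2 / 2)) := by
    have := gauss_integrable.comp_sub_right (k + α)
    exact this.congr (Eventually.of_forall fun y => by norm_num)
  have hB := T_integrableOn_Ioi (2 * α) (-(2 * α * c)) (c - m - α) c
    (by norm_num : (-1 : ℝ) < 0)
  refine Integrable.congr (((hA.const_mul (S⁻¹ * Real.exp (-(α * ((c - k) + m))))).integrableOn.sub
    (hB.const_mul α))) (Eventually.of_forall fun y => ?_)
  have g1 : S⁻¹ * Real.exp (-(α * ((c - k) + m))) * Real.exp (-(y - (k + α)) ^ 2 / 2)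
      = S⁻¹ * Real.exp (-((y - k) ^ 2 - 2 * α * ((y - c) - m) + α ^ 2) / 2) := by
    rw [mul_assoc, exp_mul_exp _ _ (-((y - k) ^ 2 - 2 * α * ((y - c) - m) + α ^ 2) / 2) (by ring)]
  have g2 : Real.exp (2 * α * y + -(2 * α * c)) = Real.exp (2 * α * (y - c)) := by
    congr 1; ring
  have g3 : stdNormalCDF (-1 * y + (c - m - α)) = stdNormalCDF (-m - (y - c) - α) := by
    congr 1; ring
  simp only [Pi.sub_apply]
  rw [g1, g2, g3]
  ring

lemma integrableOn_comp_neg_Iic {f : ℝ → ℝ} {c : ℝ} (hf : IntegrableOn f (Ioi (-c))) :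
    IntegrableOn (fun y => f (-y)) (Iic c) := by
  have h2 : Integrable ((Ioi (-c)).indicator f) :=
    (integrable_indicator_iff measurableSet_Ioi).2 hf
  have h3 := h2.comp_neg
  have h4 : (fun y : ℝ => (Ioi (-c)).indicator f (-y))
      = (Iio c).indicator fun y => f (-y) := by
    funext y
    by_cases hy : y < c <;> simp [Set.indicator_apply, hy]
  rw [h4] at h3
  have h5 : IntegrableOn (fun y => f (-y)) (Iio c) :=
    (integrable_indicator_iff measurableSet_Iio).1 h3
  rwa [IntegrableOn, Measure.restrict_congr_set Iio_ae_eq_Iic] at h5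

/-- The Chen–Epstein density `f^{α,β,c}` arising in the nonlinear CLT with mean
uncertainty. -/
noncomputable def chenEpsteinDensity (α β c y : ℝ) : ℝ :=
  (Real.sqrt (2 * Real.pi))⁻¹ *
      Real.exp (-((y - β) ^ 2 - 2 * α * (|y - c| - |c - β|) + α ^ 2) / 2)
    - α * Real.exp (2 * α * |y - c|) * stdNormalCDF (-|c - β| - |y - c| - α)

/-- The Chen–Epstein density integrates to one. -/
theorem chenEpsteinDensity_integral_eq_one (α β c : ℝ) :
    ∫ y : ℝ, chenEpsteinDensity α β c y = 1 := by
  set m : ℝ := |c - β| with hm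
  set F : ℝ → ℝ := fun u =>
    S⁻¹ * Real.exp (-((u - -β) ^ 2 - 2 * α * ((u - -c) - m) + α ^ 2) / 2)
      - α * Real.exp (2 * α * (u - -c)) * stdNormalCDF (-m - (u - -c) - α) with hF
  have hplus_eq : EqOn (chenEpsteinDensity α β c) (fun y =>
      S⁻¹ * Real.exp (-((y - β) ^ 2 - 2 * α * ((y - c) - m) + α ^ 2) / 2)
        - α * Real.exp (2 * α * (y - c)) * stdNormalCDF (-m - (y - c) - α)) (Ioi c) := by
    intro y hy
    have habs : |y - c| = y - c := abs_of_pos (sub_pos.2 hy)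
    simp only [chenEpsteinDensity, habs, ← hm]
  have hminus_eq : EqOn (chenEpsteinDensity α β c) (fun y => F (-y)) (Iic c) := by
    intro y hy
    have habs : |y - c| = -(y - c) := abs_of_nonpos (sub_nonpos.2 hy)
    simp only [chenEpsteinDensity, habs, ← hm, hF]
    have e1 : Real.exp (-((y - β) ^ 2 - 2 * α * (-(y - c) - m) + α ^ 2) / 2)
        = Real.exp (-((-y - -β) ^ 2 - 2 * α * ((-y - -c) - m) + α ^ 2) / 2) := by
      congr 1; ring
    have e2 : Real.exp (2 * α * -(y - c)) = Real.exp (2 * α * (-y - -c)) := by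
      congr 1; ring
    have e3 : stdNormalCDF (-m - -(y - c) - α) = stdNormalCDF (-m - (-y - -c) - α) := by
      congr 1; ring
    rw [e1, e2, e3]
  have hIntIoi : IntegrableOn (chenEpsteinDensity α β c) (Ioi c) :=
    (integrableOn_side α β c m).congr_fun hplus_eq.symm measurableSet_Ioi
  have hIntIic : IntegrableOn (chenEpsteinDensity α β c) (Iic c) := by
    have h0 : IntegrableOn F (Ioi (-c)) := by rw [hF]; exact integrableOn_side α (-β) (-c) m
    exact (integrableOn_comp_neg_Iic h0).congr_fun hminus_eq.symm measurableSet_Iic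
  have hIoi : ∫ y in Ioi c, chenEpsteinDensity α β c y
      = Real.exp (-(α * ((c - β) + m))) * (1 - stdNormalCDF ((c - β) - α))
        - 1/2 * Real.exp (-(2 * α * m)) * (1 - stdNormalCDF (m - α))
        + 1/2 * stdNormalCDF (-m - α) := by
    rw [setIntegral_congr_fun measurableSet_Ioi hplus_eq]
    exact integral_Ioi_side α β c m
  have hIic : ∫ y in Iic c, chenEpsteinDensity α β c y
      = Real.exp (-(α * ((-c - -β) + m))) * (1 - stdNormalCDF ((-c - -β) - α))
        - 1/2 * Real.exp (-(2 * α * m)) * (1 - stdNormalCDF (m - α))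
        + 1/2 * stdNormalCDF (-m - α) := by
    rw [setIntegral_congr_fun measurableSet_Iic hminus_eq, integral_comp_neg_Iic, hF]
    exact integral_Ioi_side α (-β) (-c) m
  rw [← intervalIntegral.integral_Iic_add_Ioi hIntIic hIntIoi, hIic, hIoi]
  rcases abs_cases (c - β) with ⟨h1, h2⟩ | ⟨h1, h2⟩ <;>
    rw [hm, h1] <;> ring_nf <;> simp [Real.exp_zero]
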